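/- Let R : k^L ⊗ k^L → k^L ⊗ k^L be given by a tensor r^{kl}_{ij} that is skew-symmetric under simultaneous swap of upper and lower indices (r^{kl}_{ij} = −r^{lk}_{ji}). Then the relation R¹²R²³ + R²³R³¹ + R³¹R¹² = 0 on (k^L)⊗³ is equivalent to the associative Yang–Baxter equation R¹²R¹³ − R²³R¹² + R¹³R²³ = 0. -/

import Mathlib

open TensorProduct

noncomputable section

set_option maxHeartbeats 2000000
set_option synthInstance.maxHeartbeats 1000000

lemma brepr (k : Type*) [Field k] (L : ℕ) (a b c x y z : Fin L) :
    ((((Pi.basisFun k (Fin L)).tensorProduct (Pi.basisFun k (Fin L))).tensorProduct (Pi.basisFun k (Fin L))).repr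
      ((Pi.basisFun k (Fin L)) a ⊗ₜ[k] (Pi.basisFun k (Fin L)) b ⊗ₜ[k] (Pi.basisFun k (Fin L)) c)) ((x,y),z)
    = if a = x then (if b = y then (if c = z then 1 else 0) else 0) else 0 := by
  have h : ((Pi.basisFun k (Fin L)) a ⊗ₜ[k] (Pi.basisFun k (Fin L)) b ⊗ₜ[k] (Pi.basisFun k (Fin L)) c)
      = (((Pi.basisFun k (Fin L)).tensorProduct (Pi.basisFun k (Fin L))).tensorProduct (Pi.basisFun k (Fin L))) ((a,b),c) := by
    simp [Module.Basis.tensorProduct_apply]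
  rw [h, Module.Basis.repr_self, Finsupp.single_apply]
  simp [Prod.ext_iff, ite_and, and_assoc]

theorem skew_cyclic_iff_AYBE
    (k : Type*) [Field k] [CharZero k] (L : ℕ)
    (r : Fin L → Fin L → Fin L → Fin L → k)
    (hr : ∀ p q i j : Fin L, r p q i j = - r q p j i)
    (R12 R23 R13 R31 : (Fin L → k) ⊗[k] (Fin L → k) ⊗[k] (Fin L → k) →ₗ[k]
      (Fin L → k) ⊗[k] (Fin L → k) ⊗[k] (Fin L → k))
    (hR12 : ∀ i j m : Fin L,
      R12 ((Pi.basisFun k (Fin L)) i ⊗ₜ[k] (Pi.basisFun k (Fin L)) j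
          ⊗ₜ[k] (Pi.basisFun k (Fin L)) m)
        = ∑ p : Fin L, ∑ q : Fin L, r p q i j •
            ((Pi.basisFun k (Fin L)) p ⊗ₜ[k] (Pi.basisFun k (Fin L)) q
              ⊗ₜ[k] (Pi.basisFun k (Fin L)) m))
    (hR23 : ∀ i j m : Fin L,
      R23 ((Pi.basisFun k (Fin L)) i ⊗ₜ[k] (Pi.basisFun k (Fin L)) j
          ⊗ₜ[k] (Pi.basisFun k (Fin L)) m)
        = ∑ p : Fin L, ∑ q : Fin L, r p q j m •
            ((Pi.basisFun k (Fin L)) i ⊗ₜ[k] (Pi.basisFun k (Fin L)) p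
              ⊗ₜ[k] (Pi.basisFun k (Fin L)) q))
    (hR13 : ∀ i j m : Fin L,
      R13 ((Pi.basisFun k (Fin L)) i ⊗ₜ[k] (Pi.basisFun k (Fin L)) j
          ⊗ₜ[k] (Pi.basisFun k (Fin L)) m)
        = ∑ p : Fin L, ∑ q : Fin L, r p q i m •
            ((Pi.basisFun k (Fin L)) p ⊗ₜ[k] (Pi.basisFun k (Fin L)) j
              ⊗ₜ[k] (Pi.basisFun k (Fin L)) q))
    (hR31 : ∀ i j m : Fin L,
      R31 ((Pi.basisFun k (Fin L)) i ⊗ₜ[k] (Pi.basisFun k (Fin L)) j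
          ⊗ₜ[k] (Pi.basisFun k (Fin L)) m)
        = ∑ p : Fin L, ∑ q : Fin L, r p q m i •
            ((Pi.basisFun k (Fin L)) q ⊗ₜ[k] (Pi.basisFun k (Fin L)) j
              ⊗ₜ[k] (Pi.basisFun k (Fin L)) p)) :
    (∀ v : (Fin L → k) ⊗[k] (Fin L → k) ⊗[k] (Fin L → k),
        R12 (R23 v) + R23 (R31 v) + R31 (R12 v) = 0)
      ↔ (∀ v : (Fin L → k) ⊗[k] (Fin L → k) ⊗[k] (Fin L → k),
          R12 (R13 v) - R23 (R12 v) + R13 (R23 v) = 0) := by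
  set E := Pi.basisFun k (Fin L) with hE
  set B := (E.tensorProduct E).tensorProduct E with hB
  have hb : ∀ a b c : Fin L, B ((a, b), c) = E a ⊗ₜ[k] E b ⊗ₜ[k] E c := by
    intro a b c; simp [hB, Module.Basis.tensorProduct_apply]
  set c1 : Fin L → Fin L → Fin L → Fin L → Fin L → Fin L → k := fun i j m x y z =>
    (∑ p : Fin L, r p z j m * r x y i p) + (∑ p : Fin L, r p x m i * r y z j p)
      + (∑ p : Fin L, r p y i j * r z x m p) with hc1
  set c2 : Fin L → Fin L → Fin L → Fin L → Fin L → Fin L → k := fun i j m x y z =>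
    (∑ p : Fin L, r p z i m * r x y p j) - (∑ p : Fin L, r x p i j * r y z p m)
      + (∑ p : Fin L, r y p j m * r x z i p) with hc2
  have key1 : ∀ i j m x y z : Fin L,
      (B.repr (R12 (R23 (E i ⊗ₜ[k] E j ⊗ₜ[k] E m)) + R23 (R31 (E i ⊗ₜ[k] E j ⊗ₜ[k] E m))
        + R31 (R12 (E i ⊗ₜ[k] E j ⊗ₜ[k] E m)))) ((x,y),z) = c1 i j m x y z := by
    intro i j m x y z
    rw [hR23 i j m, hR31 i j m, hR12 i j m]
    simp only [map_add, map_sum, map_smul, hR12, hR23, hR31]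
    simp only [map_add, map_sum, map_smul, hR12, hR23, hR31, hB, hE, brepr,
      Finsupp.coe_add, Pi.add_apply, Finsupp.coe_finset_sum, Finsupp.coe_smul,
      Finset.sum_apply, Pi.smul_apply, smul_eq_mul, mul_ite, mul_one, mul_zero,
      ite_mul, zero_mul, Finset.sum_ite_irrel, Finset.sum_const_zero,
      Finset.sum_ite_eq', Finset.mem_univ, if_true]
    rfl
  have key2 : ∀ i j m x y z : Fin L,
      (B.repr (R12 (R13 (E i ⊗ₜ[k] E j ⊗ₜ[k] E m)) - R23 (R12 (E i ⊗ₜ[k] E j ⊗ₜ[k] E m))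
        + R13 (R23 (E i ⊗ₜ[k] E j ⊗ₜ[k] E m)))) ((x,y),z) = c2 i j m x y z := by
    intro i j m x y z
    rw [hR13 i j m, hR12 i j m, hR23 i j m]
    simp only [map_add, map_sub, map_sum, map_smul, hR12, hR23, hR13]
    simp only [map_add, map_sub, map_sum, map_smul, hR12, hR23, hR13, hB, hE, brepr,
      Finsupp.coe_add, Finsupp.coe_sub, Pi.add_apply, Pi.sub_apply,
      Finsupp.coe_finset_sum, Finsupp.coe_smul,
      Finset.sum_apply, Pi.smul_apply, smul_eq_mul, mul_ite, mul_one, mul_zero,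
      ite_mul, zero_mul, Finset.sum_ite_irrel, Finset.sum_const_zero,
      Finset.sum_ite_eq', Finset.mem_univ, if_true]
    rfl
  have equiv1 : (∀ v, R12 (R23 v) + R23 (R31 v) + R31 (R12 v) = 0)
      ↔ ∀ i j m x y z : Fin L, c1 i j m x y z = 0 := by
    constructor
    · intro h i j m x y z
      rw [← key1 i j m x y z, h]
      simp
    · intro h v
      have hzero : ∀ a b c : Fin L,
          R12 (R23 (E a ⊗ₜ[k] E b ⊗ₜ[k] E c)) + R23 (R31 (E a ⊗ₜ[k] E b ⊗ₜ[k] E c))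
            + R31 (R12 (E a ⊗ₜ[k] E b ⊗ₜ[k] E c)) = 0 := by
        intro a b c
        apply B.repr.injective
        ext ⟨⟨x, y⟩, z⟩
        rw [key1 a b c x y z, h a b c x y z]
        simp
      rw [← B.sum_repr v]
      simp only [map_sum, map_smul]
      have hsplit : (∑ t : (Fin L × Fin L) × Fin L,
            ((B.repr v) t • R12 (R23 (B t)) + (B.repr v) t • R23 (R31 (B t))
              + (B.repr v) t • R31 (R12 (B t))))
          = (∑ t : (Fin L × Fin L) × Fin L, (B.repr v) t • R12 (R23 (B t)))
            + (∑ t : (Fin L × Fin L) × Fin L, (B.repr v) t • R23 (R31 (B t)))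
            + (∑ t : (Fin L × Fin L) × Fin L, (B.repr v) t • R31 (R12 (B t))) := by
        rw [Finset.sum_add_distrib, Finset.sum_add_distrib]
      rw [← hsplit]
      apply Finset.sum_eq_zero
      rintro ⟨⟨a, b⟩, c⟩ -
      rw [hb a b c, ← smul_add, ← smul_add, hzero a b c, smul_zero]
  have equiv2 : (∀ v, R12 (R13 v) - R23 (R12 v) + R13 (R23 v) = 0)
      ↔ ∀ i j m x y z : Fin L, c2 i j m x y z = 0 := by
    constructor
    · intro h i j m x y z
      rw [← key2 i j m x y z, h]
      simp
    · intro h v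
      have hzero : ∀ a b c : Fin L,
          R12 (R13 (E a ⊗ₜ[k] E b ⊗ₜ[k] E c)) - R23 (R12 (E a ⊗ₜ[k] E b ⊗ₜ[k] E c))
            + R13 (R23 (E a ⊗ₜ[k] E b ⊗ₜ[k] E c)) = 0 := by
        intro a b c
        apply B.repr.injective
        ext ⟨⟨x, y⟩, z⟩
        rw [key2 a b c x y z, h a b c x y z]
        simp
      have hzero' : ∀ a b c : Fin L,
          R12 (R13 (E a ⊗ₜ[k] E b ⊗ₜ[k] E c)) + R13 (R23 (E a ⊗ₜ[k] E b ⊗ₜ[k] E c))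
            = R23 (R12 (E a ⊗ₜ[k] E b ⊗ₜ[k] E c)) := by
        intro a b c
        have h2 := hzero a b c
        have h3 : R12 (R13 (E a ⊗ₜ[k] E b ⊗ₜ[k] E c)) + R13 (R23 (E a ⊗ₜ[k] E b ⊗ₜ[k] E c))
            - R23 (R12 (E a ⊗ₜ[k] E b ⊗ₜ[k] E c)) = 0 := by rw [← h2]; abel
        exact sub_eq_zero.mp h3
      rw [show R12 (R13 v) - R23 (R12 v) + R13 (R23 v)
          = R12 (R13 v) + R13 (R23 v) - R23 (R12 v) from by abel,
        sub_eq_zero, ← B.sum_repr v]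
      simp only [map_sum, map_smul]
      have hsplit : (∑ t : (Fin L × Fin L) × Fin L,
            ((B.repr v) t • R12 (R13 (B t)) + (B.repr v) t • R13 (R23 (B t))))
          = (∑ t : (Fin L × Fin L) × Fin L, (B.repr v) t • R12 (R13 (B t)))
            + (∑ t : (Fin L × Fin L) × Fin L, (B.repr v) t • R13 (R23 (B t))) :=
        Finset.sum_add_distrib
      rw [← hsplit]
      apply Finset.sum_congr rfl
      rintro ⟨⟨a, b⟩, c⟩ -
      rw [hb a b c, ← smul_add, hzero' a b c]
  have flip : ∀ i j m x y z : Fin L, c2 i j m x y z = - c1 i m j x z y := by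
    intro i j m x y z
    show (∑ p : Fin L, r p z i m * r x y p j) - (∑ p : Fin L, r x p i j * r y z p m)
        + (∑ p : Fin L, r y p j m * r x z i p)
      = -((∑ p : Fin L, r p y m j * r x z i p) + (∑ p : Fin L, r p x j i * r z y m p)
        + (∑ p : Fin L, r p z i m * r y x j p))
    have hA : (∑ p : Fin L, r p z i m * r x y p j) = -∑ p : Fin L, r p z i m * r y x j p := by
      rw [← Finset.sum_neg_distrib]
      exact Finset.sum_congr rfl fun p _ => by rw [hr x y p j]; ring
    have hBB : (∑ p : Fin L, r x p i j * r y z p m) = ∑ p : Fin L, r p x j i * r z y m p := by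
      exact Finset.sum_congr rfl fun p _ => by rw [hr x p i j, hr y z p m]; ring
    have hC : (∑ p : Fin L, r y p j m * r x z i p) = -∑ p : Fin L, r p y m j * r x z i p := by
      rw [← Finset.sum_neg_distrib]
      exact Finset.sum_congr rfl fun p _ => by rw [hr y p j m]; ring
    rw [hA, hBB, hC]
    ring
  rw [equiv1, equiv2]
  constructor
  · intro h i j m x y z
    rw [flip, h, neg_zero]
  · intro h i j m x y z
    exact neg_eq_zero.mp ((flip i m j x z y).symm.trans (h i m j x z y))

end
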